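/- Let 0 < p₁ < ⋯ < p_K ≤ 1 and 0 < P₁ < ⋯ < P_K ≤ 1 define a 2-player stingy quantum race. If (x,y) is a Nash equilibrium, then supp(x) ∪ supp(y) is an interval of integers containing K, i.e., equal to {T, T+1, …, K} for some 1 ≤ T ≤ K. -/
import Mathlib


open Finset

/-- Alice's payoff `e_i^T A₀ y` in the 2-player stingy quantum race. -/
noncomputable def payoffA (K : ℕ) (p P : ℕ → ℝ) (y : ℕ → ℝ) (i : ℕ) : ℝ :=
  p i * ∑ j ∈ Finset.Icc 1 K, y j * (if j ≤ i then 1 - P j else 1)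

/-- Bob's payoff `x^T B₀ e_j` in the 2-player stingy quantum race. -/
noncomputable def payoffB (K : ℕ) (p P : ℕ → ℝ) (x : ℕ → ℝ) (j : ℕ) : ℝ :=
  P j * ∑ i ∈ Finset.Icc 1 K, x i * (if i ≤ j then 1 - p i else 1)

lemma payoffA_eq (K : ℕ) (p P y : ℕ → ℝ) (hy1 : ∑ j ∈ Finset.Icc 1 K, y j = 1)
    (i : ℕ) (hi : i ≤ K) :
    payoffA K p P y i = p i * (1 - ∑ j ∈ Finset.Icc 1 i, y j * P j) := by
  unfold payoffA
  congr 1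
  have h1 : ∀ j ∈ Finset.Icc 1 K, y j * (if j ≤ i then 1 - P j else 1)
      = y j - (if j ≤ i then y j * P j else 0) := by
    intro j _; split_ifs <;> ring
  rw [Finset.sum_congr rfl h1, Finset.sum_sub_distrib, hy1, Finset.sum_ite, Finset.sum_const_zero,
    add_zero]
  congr 1
  congr 1
  ext j
  simp only [Finset.mem_filter, Finset.mem_Icc]
  omega

lemma payoffB_eq (K : ℕ) (p P x : ℕ → ℝ) (hx1 : ∑ i ∈ Finset.Icc 1 K, x i = 1)
    (j : ℕ) (hj : j ≤ K) :
    payoffB K p P x j = P j * (1 - ∑ i ∈ Finset.Icc 1 j, x i * p i) := by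
  unfold payoffB
  congr 1
  have h1 : ∀ i ∈ Finset.Icc 1 K, x i * (if i ≤ j then 1 - p i else 1)
      = x i - (if i ≤ j then x i * p i else 0) := by
    intro i _; split_ifs <;> ring
  rw [Finset.sum_congr rfl h1, Finset.sum_sub_distrib, hx1, Finset.sum_ite, Finset.sum_const_zero,
    add_zero]
  congr 1
  congr 1
  ext i
  simp only [Finset.mem_filter, Finset.mem_Icc]
  omega

/-- The key cumulative-sum bound: `Σ_{j=1}^t y j * P j ≤ P t`. -/
lemma cumsum_le (K t : ℕ) (P y : ℕ → ℝ)
    (hP1 : 0 < P 1)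
    (hPmono : ∀ i j, 1 ≤ i → i < j → j ≤ K → P i < P j)
    (hy0 : ∀ j, 0 ≤ y j) (hy1 : ∑ j ∈ Finset.Icc 1 K, y j = 1)
    (ht1 : 1 ≤ t) (htK : t ≤ K) :
    ∑ j ∈ Finset.Icc 1 t, y j * P j ≤ P t := by
  have hPt : 0 < P t := by
    rcases eq_or_lt_of_le ht1 with h | h
    · rwa [← h]
    · exact lt_trans hP1 (hPmono 1 t le_rfl h htK)
  calc ∑ j ∈ Finset.Icc 1 t, y j * P j
      ≤ ∑ j ∈ Finset.Icc 1 t, y j * P t := by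
        apply Finset.sum_le_sum
        intro j hj
        simp only [Finset.mem_Icc] at hj
        have : P j ≤ P t := by
          rcases eq_or_lt_of_le hj.2 with h | h
          · rw [h]
          · exact le_of_lt (hPmono j t hj.1 h htK)
        exact mul_le_mul_of_nonneg_left this (hy0 j)
    _ = (∑ j ∈ Finset.Icc 1 t, y j) * P t := by rw [← Finset.sum_mul]
    _ ≤ 1 * P t := by
        apply mul_le_mul_of_nonneg_right _ (le_of_lt hPt)
        rw [← hy1]
        apply Finset.sum_le_sum_of_subset_of_nonneg
        · exact Finset.Icc_subset_Icc le_rfl htK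
        · intro j _ _; exact hy0 j
    _ = P t := one_mul _

theorem stmt_4 (K : ℕ) (p P : ℕ → ℝ) (x y : ℕ → ℝ)
    (hK : 2 ≤ K)
    (hp1 : 0 < p 1) (hpK : p K ≤ 1)
    (hpmono : ∀ i j, 1 ≤ i → i < j → j ≤ K → p i < p j)
    (hP1 : 0 < P 1) (hPK : P K ≤ 1)
    (hPmono : ∀ i j, 1 ≤ i → i < j → j ≤ K → P i < P j)
    (hx0 : ∀ i, 0 ≤ x i) (hx1 : ∑ i ∈ Finset.Icc 1 K, x i = 1)
    (hy0 : ∀ j, 0 ≤ y j) (hy1 : ∑ j ∈ Finset.Icc 1 K, y j = 1)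
    (hxsupp : ∀ i, x i ≠ 0 → i ∈ Finset.Icc 1 K)
    (hysupp : ∀ j, y j ≠ 0 → j ∈ Finset.Icc 1 K)
    -- Nash equilibrium: every strategy in the support is a best response
    (hNEx : ∀ i ∈ Finset.Icc 1 K, 0 < x i →
      ∀ i' ∈ Finset.Icc 1 K, payoffA K p P y i' ≤ payoffA K p P y i)
    (hNEy : ∀ j ∈ Finset.Icc 1 K, 0 < y j →
      ∀ j' ∈ Finset.Icc 1 K, payoffB K p P x j' ≤ payoffB K p P x j) :
    ∃ T, 1 ≤ T ∧ T ≤ K ∧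
      ∀ j, (j ∈ Finset.Icc 1 K ∧ (0 < x j ∨ 0 < y j)) ↔ j ∈ Finset.Icc T K := by
  -- positivity of p and P on [1,K]
  have hppos : ∀ t, 1 ≤ t → t ≤ K → 0 < p t := by
    intro t h1 h2
    rcases eq_or_lt_of_le h1 with h | h
    · rwa [← h]
    · exact lt_trans hp1 (hpmono 1 t le_rfl h h2)
  have hPpos : ∀ t, 1 ≤ t → t ≤ K → 0 < P t := by
    intro t h1 h2
    rcases eq_or_lt_of_le h1 with h | h
    · rwa [← h]
    · exact lt_trans hP1 (hPmono 1 t le_rfl h h2)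
  -- Step lemma A: x t > 0, t < K implies y (t+1) > 0
  have stepA : ∀ t, 1 ≤ t → t < K → 0 < x t → 0 < y (t + 1) := by
    intro t ht1 htK hxt
    by_contra h
    have hyt1 : y (t + 1) = 0 := le_antisymm (not_lt.mp h) (hy0 _)
    have htm : t ∈ Finset.Icc 1 K := Finset.mem_Icc.mpr ⟨ht1, le_of_lt htK⟩
    have ht1m : t + 1 ∈ Finset.Icc 1 K := Finset.mem_Icc.mpr ⟨by omega, by omega⟩
    have hN := hNEx t htm hxt (t + 1) ht1m
    rw [payoffA_eq K p P y hy1 t (le_of_lt htK),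
        payoffA_eq K p P y hy1 (t + 1) (by omega)] at hN
    have hsum : ∑ j ∈ Finset.Icc 1 (t + 1), y j * P j = ∑ j ∈ Finset.Icc 1 t, y j * P j := by
      rw [Finset.sum_Icc_succ_top (by omega : 1 ≤ t + 1), hyt1, zero_mul, add_zero]
    rw [hsum] at hN
    have hS : ∑ j ∈ Finset.Icc 1 t, y j * P j ≤ P t :=
      cumsum_le K t P y hP1 hPmono hy0 hy1 ht1 (le_of_lt htK)
    have hPt1 : P t < 1 := lt_of_lt_of_le (hPmono t K ht1 htK le_rfl) hPK
    have hpos : 0 < 1 - ∑ j ∈ Finset.Icc 1 t, y j * P j := by linarith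
    have hplt : p t < p (t + 1) := hpmono t (t + 1) ht1 (by omega) (by omega)
    nlinarith
  -- Step lemma B: y t > 0, t < K implies x (t+1) > 0
  have stepB : ∀ t, 1 ≤ t → t < K → 0 < y t → 0 < x (t + 1) := by
    intro t ht1 htK hyt
    by_contra h
    have hxt1 : x (t + 1) = 0 := le_antisymm (not_lt.mp h) (hx0 _)
    have htm : t ∈ Finset.Icc 1 K := Finset.mem_Icc.mpr ⟨ht1, le_of_lt htK⟩
    have ht1m : t + 1 ∈ Finset.Icc 1 K := Finset.mem_Icc.mpr ⟨by omega, by omega⟩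
    have hN := hNEy t htm hyt (t + 1) ht1m
    rw [payoffB_eq K p P x hx1 t (le_of_lt htK),
        payoffB_eq K p P x hx1 (t + 1) (by omega)] at hN
    have hsum : ∑ i ∈ Finset.Icc 1 (t + 1), x i * p i = ∑ i ∈ Finset.Icc 1 t, x i * p i := by
      rw [Finset.sum_Icc_succ_top (by omega : 1 ≤ t + 1), hxt1, zero_mul, add_zero]
    rw [hsum] at hN
    have hS : ∑ i ∈ Finset.Icc 1 t, x i * p i ≤ p t :=
      cumsum_le K t p x hp1 hpmono hx0 hx1 ht1 (le_of_lt htK)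
    have hpt1 : p t < 1 := lt_of_lt_of_le (hpmono t K ht1 htK le_rfl) hpK
    have hpos : 0 < 1 - ∑ i ∈ Finset.Icc 1 t, x i * p i := by linarith
    have hPlt : P t < P (t + 1) := hPmono t (t + 1) ht1 (by omega) (by omega)
    nlinarith
  -- the support set
  set s : Finset ℕ := (Finset.Icc 1 K).filter (fun j => 0 < x j ∨ 0 < y j) with hs
  have hsne : s.Nonempty := by
    have : ∃ i ∈ Finset.Icc 1 K, x i ≠ 0 := by
      by_contra hc
      push_neg at hc
      rw [Finset.sum_eq_zero hc] at hx1
      norm_num at hx1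
    obtain ⟨i, hi, hxi⟩ := this
    exact ⟨i, Finset.mem_filter.mpr ⟨hi, Or.inl (lt_of_le_of_ne (hx0 i) (Ne.symm hxi))⟩⟩
  set T := s.min' hsne with hT
  have hTmem : T ∈ s := s.min'_mem hsne
  have hTmem' := Finset.mem_filter.mp hTmem
  have hT1 : 1 ≤ T := (Finset.mem_Icc.mp hTmem'.1).1
  have hTK : T ≤ K := (Finset.mem_Icc.mp hTmem'.1).2
  -- upward closure by induction
  have hclaim : ∀ d, T + d ≤ K → 0 < x (T + d) ∨ 0 < y (T + d) := by
    intro d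
    induction d with
    | zero => intro _; simpa using hTmem'.2
    | succ n ih =>
      intro hle
      have hlt : T + n < K := by omega
      rcases ih (by omega) with h | h
      · have := stepA (T + n) (by omega) hlt h
        right; exact this
      · have := stepB (T + n) (by omega) hlt h
        left; exact this
  refine ⟨T, hT1, hTK, fun j => ⟨fun ⟨hj, hpos⟩ => ?_, fun hj => ?_⟩⟩
  · rw [Finset.mem_Icc]
    exact ⟨s.min'_le j (Finset.mem_filter.mpr ⟨hj, hpos⟩), (Finset.mem_Icc.mp hj).2⟩
  · rw [Finset.mem_Icc] at hj
    refine ⟨Finset.mem_Icc.mpr ⟨by omega, hj.2⟩, ?_⟩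
    have := hclaim (j - T) (by omega)
    have hjeq : T + (j - T) = j := by omega
    rwa [hjeq] at this
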